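/- Let A be a Cohen ring (complete Noetherian local ring with maximal ideal pA) with residue field k of characteristic p. There exists a unique map s from k^(p^∞) := ∩_n k^(p^n) to A such that res(s(α)) = α and s(α) is a p^n-th power in A for every n ∈ ℕ. Moreover s is multiplicative: s(αβ) = s(α)s(β). -/

import Mathlib

open IsLocalRing

section Helpers

variable {A : Type*} [CommRing A] [IsLocalRing A] {p : ℕ} [CharP (ResidueField A) p]

theorem pdvd_iff (hmax : maximalIdeal A = Ideal.span {(p : A)}) {z : A} :
    (p : A) ∣ z ↔ residue A z = 0 := by
  rw [← Ideal.mem_span_singleton, ← hmax]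
  exact (Ideal.Quotient.eq_zero_iff_mem).symm

theorem res_eq_iff (hmax : maximalIdeal A = Ideal.span {(p : A)}) {x y : A} :
    residue A x = residue A y ↔ (p : A) ∣ (x - y) := by
  rw [pdvd_iff hmax, map_sub, sub_eq_zero]

/-- key congruence: lifts of the same residue have p^n-th powers congruent mod p^(n+1). -/
theorem key_cong (hmax : maximalIdeal A = Ideal.span {(p : A)}) {x y : A}
    (h : residue A x = residue A y) (n : ℕ) :
    (p : A) ^ (n + 1) ∣ x ^ p ^ n - y ^ p ^ n := by
  induction n with
  | zero => simpa using (res_eq_iff hmax).mp h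
  | succ n ih =>
    have hfact : (∑ i ∈ Finset.range p, (x ^ p ^ n) ^ i * (y ^ p ^ n) ^ (p - 1 - i)) *
        (x ^ p ^ n - y ^ p ^ n) = (x ^ p ^ n) ^ p - (y ^ p ^ n) ^ p :=
      geom_sum₂_mul (x ^ p ^ n) (y ^ p ^ n) p
    have hsum : (p : A) ∣ ∑ i ∈ Finset.range p, (x ^ p ^ n) ^ i * (y ^ p ^ n) ^ (p - 1 - i) := by
      rw [pdvd_iff hmax]
      have hterm : ∀ i ∈ Finset.range p,
          residue A ((x ^ p ^ n) ^ i * (y ^ p ^ n) ^ (p - 1 - i)) =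
          residue A y ^ (p ^ n * (p - 1)) := by
        intro i hi
        rw [Finset.mem_range] at hi
        rw [map_mul, map_pow, map_pow, map_pow, map_pow, h, ← pow_mul, ← pow_mul, ← pow_add,
          ← Nat.mul_add]
        congr 2
        omega
      rw [map_sum, Finset.sum_congr rfl hterm, Finset.sum_const, Finset.card_range,
        nsmul_eq_mul]
      simp [CharP.cast_eq_zero (ResidueField A) p]
    have h2 : (p:A) ^ (n+1+1) = (p:A) * (p:A)^(n+1) := by ring
    rw [h2, show p ^ (n+1) = p ^ n * p from pow_succ p n, pow_mul, pow_mul, ← hfact]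
    exact mul_dvd_mul hsum ih

/-- p^n-th roots in the residue field are unique. -/
theorem root_unique (hp : p.Prime) {a b : ResidueField A} {n : ℕ}
    (h : a ^ p ^ n = b ^ p ^ n) : a = b := by
  haveI : Fact p.Prime := ⟨hp⟩
  apply (frobenius_inj (ResidueField A) p).iterate n
  simpa [iterate_frobenius] using h

theorem smod_iff (hmax : maximalIdeal A = Ideal.span {(p : A)}) {a b : A} {n : ℕ} :
    a ≡ b [SMOD ((maximalIdeal A) ^ n • ⊤ : Submodule A A)] ↔ (p : A) ^ n ∣ a - b := by
  rw [SModEq.sub_mem, smul_eq_mul, Ideal.mul_top, hmax, Ideal.span_singleton_pow,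
    Ideal.mem_span_singleton]

/-- Rigidity: two lifts of the same residue which are p^n-th powers for all n are equal. -/
theorem rigid (hp : p.Prime) (hmax : maximalIdeal A = Ideal.span {(p : A)})
    [IsAdicComplete (maximalIdeal A) A] {x y : A}
    (h : residue A x = residue A y)
    (hx : ∀ n : ℕ, ∃ a : A, a ^ p ^ n = x) (hy : ∀ n : ℕ, ∃ b : A, b ^ p ^ n = y) :
    x = y := by
  rw [← sub_eq_zero]
  refine IsHausdorff.haus (inferInstance : IsHausdorff (maximalIdeal A) A) _ fun n => ?_
  rw [show (0:A) = y - y by ring]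
  rw [SModEq.sub_mem] at *
  rw [show x - y - (y - y) = x - y by ring, smul_eq_mul, Ideal.mul_top, hmax,
    Ideal.span_singleton_pow, Ideal.mem_span_singleton]
  obtain ⟨a, ha⟩ := hx n
  obtain ⟨b, hb⟩ := hy n
  have hres : residue A a = residue A b := by
    apply root_unique hp (n := n)
    rw [← map_pow, ← map_pow, ha, hb, h]
  have hk := key_cong hmax hres n
  rw [ha, hb] at hk
  exact dvd_trans (pow_dvd_pow _ (Nat.le_succ n)) hk

end Helpers

section Main

variable {A : Type*} [CommRing A] [IsLocalRing A] {p : ℕ} [CharP (ResidueField A) p]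

theorem eq_of_forall_pow_dvd (hmax : maximalIdeal A = Ideal.span {(p : A)})
    [IsAdicComplete (maximalIdeal A) A] {x y : A}
    (h : ∀ m : ℕ, (p : A) ^ m ∣ x - y) : x = y := by
  rw [← sub_eq_zero]
  refine IsHausdorff.haus (inferInstance : IsHausdorff (maximalIdeal A) A) _ fun n => ?_
  rw [smod_iff hmax, sub_zero]
  exact h n

theorem exists_teich (hp : p.Prime) (hmax : maximalIdeal A = Ideal.span {(p : A)})
    [IsAdicComplete (maximalIdeal A) A]
    (α : ResidueField A) (hα : ∀ n : ℕ, ∃ β : ResidueField A, β ^ p ^ n = α) :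
    ∃ x : A, residue A x = α ∧ ∀ n : ℕ, ∃ a : A, a ^ p ^ n = x := by
  choose β hβ using hα
  have hβstep : ∀ k, β (k + 1) ^ p = β k := by
    intro k
    apply root_unique hp (n := k)
    rw [← pow_mul, hβ k, show p * p ^ k = p ^ (k + 1) by ring, hβ (k + 1)]
  choose b hb using fun n => IsLocalRing.residue_surjective (R := A) (β n)
  have hbstep : ∀ k, residue A (b (k + 1) ^ p) = residue A (b k) := by
    intro k
    rw [map_pow, hb, hb, hβstep]
  -- the Cauchy sequences yₙ m = b (n+m) ^ p ^ m
  have hcauchy1 : ∀ n m : ℕ, (p : A) ^ (m + 1) ∣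
      b (n + (m + 1)) ^ p ^ (m + 1) - b (n + m) ^ p ^ m := by
    intro n m
    have := key_cong hmax (hbstep (n + m)) m
    rw [← pow_mul, show p * p ^ m = p ^ (m + 1) by ring] at this
    rw [show n + (m + 1) = n + m + 1 by ring]
    exact this
  have hcauchy : ∀ n m m' : ℕ, m ≤ m' → (p : A) ^ m ∣
      b (n + m) ^ p ^ m - b (n + m') ^ p ^ m' := by
    intro n m m' hm
    induction m' , hm using Nat.le_induction with
    | base => simp
    | succ m' hm ih =>
      have h2 : (p : A) ^ m ∣ b (n + (m' + 1)) ^ p ^ (m' + 1) - b (n + m') ^ p ^ m' :=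
        dvd_trans (pow_dvd_pow _ (by omega)) (hcauchy1 n m')
      have := dvd_sub ih h2
      rw [show b (n + m) ^ p ^ m - b (n + m') ^ p ^ m' -
          (b (n + (m' + 1)) ^ p ^ (m' + 1) - b (n + m') ^ p ^ m') =
          b (n + m) ^ p ^ m - b (n + (m' + 1)) ^ p ^ (m' + 1) by ring] at this
      exact this
  have hlim : ∀ n : ℕ, ∃ L : A, ∀ m : ℕ, (p : A) ^ m ∣ b (n + m) ^ p ^ m - L := by
    intro n
    obtain ⟨L, hL⟩ := IsPrecomplete.prec
      (inferInstanceAs (IsPrecomplete (maximalIdeal A) A))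
      (f := fun m => b (n + m) ^ p ^ m)
      (fun {m m'} hm => (smod_iff hmax).mpr (hcauchy n m m' hm))
    exact ⟨L, fun m => (smod_iff hmax).mp (hL m)⟩
  choose c hc using hlim
  have hcres : ∀ n, residue A (c n) = β n := by
    intro n
    have h1 := hc n 1
    rw [pow_one, pow_one] at h1
    have := (res_eq_iff (p := p) hmax).mpr h1
    rw [← this, map_pow, hb, hβstep]
  have hcp : ∀ n, c (n + 1) ^ p = c n := by
    intro n
    apply eq_of_forall_pow_dvd hmax
    intro m
    have t1 : (p : A) ^ m ∣ (b (n + 1 + m) ^ p ^ m) ^ p - c (n + 1) ^ p :=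
      dvd_trans (hc (n + 1) m) (sub_dvd_pow_sub_pow _ _ p)
    have t2 : (p : A) ^ m ∣ b (n + (m + 1)) ^ p ^ (m + 1) - c n :=
      dvd_trans (pow_dvd_pow _ (Nat.le_succ m)) (hc n (m + 1))
    have hx : (b (n + 1 + m) ^ p ^ m) ^ p = b (n + (m + 1)) ^ p ^ (m + 1) := by
      rw [← pow_mul, show p ^ m * p = p ^ (m + 1) by ring, show n + 1 + m = n + (m + 1) by ring]
    rw [hx] at t1
    have := dvd_sub t2 t1
    rwa [show b (n + (m + 1)) ^ p ^ (m + 1) - c n -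
        (b (n + (m + 1)) ^ p ^ (m + 1) - c (n + 1) ^ p) = c (n + 1) ^ p - c n by ring] at this
  have hcpow : ∀ n, c n ^ p ^ n = c 0 := by
    intro n
    induction n with
    | zero => simp
    | succ n ih =>
      rw [show p ^ (n + 1) = p * p ^ n by ring, pow_mul, hcp, ih]
  refine ⟨c 0, ?_, fun n => ⟨c n, hcpow n⟩⟩
  rw [hcres 0]
  have := hβ 0
  rwa [pow_zero, pow_one] at this

end Main

/-- Teichmüller representatives: in a Cohen ring `A` with residue field `k`
of characteristic `p`, there is a unique map `s` on the largest perfect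
subfield `k^(p^∞) = {α | ∀ n, α is a pⁿ-th power}` such that `s α` is a
representative of `α` which is a `pⁿ`-th power for every `n`; moreover `s`
is multiplicative. -/
theorem cohenRing_exists_unique_multiplicative_representatives
    {A : Type*} [CommRing A] [IsLocalRing A] [IsNoetherianRing A]
    (p : ℕ) (hp : p.Prime) [CharP (ResidueField A) p]
    (hmax : maximalIdeal A = Ideal.span {(p : A)})
    [IsAdicComplete (maximalIdeal A) A] :
    ∃ s : ResidueField A → A,
      (∀ α : ResidueField A, (∀ n : ℕ, ∃ β : ResidueField A, β ^ p ^ n = α) →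
        residue A (s α) = α ∧ ∀ n : ℕ, ∃ a : A, a ^ p ^ n = s α) ∧
      (∀ s' : ResidueField A → A,
        (∀ α : ResidueField A, (∀ n : ℕ, ∃ β : ResidueField A, β ^ p ^ n = α) →
          residue A (s' α) = α ∧ ∀ n : ℕ, ∃ a : A, a ^ p ^ n = s' α) →
        ∀ α : ResidueField A, (∀ n : ℕ, ∃ β : ResidueField A, β ^ p ^ n = α) →
          s' α = s α) ∧
      (∀ α β : ResidueField A,
        (∀ n : ℕ, ∃ γ : ResidueField A, γ ^ p ^ n = α) →
        (∀ n : ℕ, ∃ γ : ResidueField A, γ ^ p ^ n = β) →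
        s (α * β) = s α * s β) := by
  classical
  set S : ResidueField A → A := fun α =>
    if h : ∀ n : ℕ, ∃ β : ResidueField A, β ^ p ^ n = α then
      (exists_teich hp hmax α h).choose else 0 with hS
  have hSspec : ∀ α : ResidueField A, (∀ n : ℕ, ∃ β : ResidueField A, β ^ p ^ n = α) →
      residue A (S α) = α ∧ ∀ n : ℕ, ∃ a : A, a ^ p ^ n = S α := by
    intro α hα
    simp only [hS, dif_pos hα]
    exact (exists_teich hp hmax α hα).choose_spec
  refine ⟨S, hSspec, ?_, ?_⟩
  · intro s' hs' α hα
    obtain ⟨h1, h2⟩ := hs' α hα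
    obtain ⟨h1', h2'⟩ := hSspec α hα
    exact rigid hp hmax (h1.trans h1'.symm) h2 h2'
  · intro α β hα hβ
    have hαβ : ∀ n : ℕ, ∃ γ : ResidueField A, γ ^ p ^ n = α * β := fun n => by
      obtain ⟨a, ha⟩ := hα n
      obtain ⟨b, hb⟩ := hβ n
      exact ⟨a * b, by rw [mul_pow, ha, hb]⟩
    obtain ⟨h1, h2⟩ := hSspec _ hαβ
    obtain ⟨ha1, ha2⟩ := hSspec α hα
    obtain ⟨hb1, hb2⟩ := hSspec β hβ
    refine rigid hp hmax ?_ h2 ?_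
    · rw [h1, map_mul, ha1, hb1]
    · intro n
      obtain ⟨a, ha⟩ := ha2 n
      obtain ⟨b, hb⟩ := hb2 n
      exact ⟨a * b, by rw [mul_pow, ha, hb]⟩
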